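/- Let m ≥ 2, F = GF(2^{m+2}) with irreducible polynomial x^{m+2}+x+1, and R the set of polynomials over GF(2) of degree at most m−2. Let D₁ be the 2^{m+2} × 4 matrix with entry f·g for row f ∈ F and column g ∈ {0, 1, x, x+1}. Then (i) D₁ is a difference matrix D(2^{m+2}, 4, 2^{m+2}) over F; (ii) letting D₂ be the submatrix with rows indexed by R ∪ (x^{m+1}+x^m+x^{m-1}+R) and φ : F → GF(2^m) the truncation map keeping only terms of degree < m, the matrix φ(D₂) is a difference matrix D(2^m, 4, 2^m) over GF(2^m). -/

import Mathlib

open Polynomial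

private lemma two_zero : (2 : Polynomial (ZMod 2)) = 0 := by
  have h : ((2:ℕ) : Polynomial (ZMod 2)) = 0 := by
    exact_mod_cast CharP.cast_eq_zero (Polynomial (ZMod 2)) 2
  exact_mod_cast h

private lemma deg_lt {h : Polynomial (ZMod 2)} {c n : ℕ} (h1 : h.natDegree ≤ c) (h2 : c < n) :
    degree h < (n : ℕ) := by
  refine lt_of_le_of_lt (degree_le_natDegree) ?_
  exact_mod_cast Nat.cast_lt.mpr (lt_of_le_of_lt h1 h2)

private lemma natdeg_le_of_deg_lt {f : Polynomial (ZMod 2)} {n : ℕ}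
    (h : degree f < ((n+1 : ℕ) : WithBot ℕ)) : f.natDegree ≤ n := by
  by_cases hz : f = 0
  · simp [hz]
  · exact Nat.lt_succ_iff.mp ((natDegree_lt_iff_degree_lt hz).mpr h)

private lemma mod_eq_of {q a h : Polynomial (ZMod 2)} (hq : Monic q)
    (hd : degree h < degree q) (hdvd : q ∣ a - h) : a %ₘ q = h := by
  have h1 : q ∣ a - a %ₘ q := ⟨a /ₘ q, by linear_combination - (modByMonic_add_div a q)⟩
  have h2 : q ∣ a %ₘ q - h := by
    have h3 := dvd_sub hdvd h1
    have h4 : a - h - (a - a %ₘ q) = a %ₘ q - h := by ring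
    rwa [h4] at h3
  have h5 := Polynomial.eq_zero_of_dvd_of_degree_lt h2
    (lt_of_le_of_lt (degree_sub_le _ _) (max_lt (degree_modByMonic_lt a hq) hd))
  exact sub_eq_zero.mp h5

private lemma Pmonic (k : ℕ) : Monic (X^(k+4) + X + 1 : Polynomial (ZMod 2)) := by
  have h : (X^(k+4) + X + 1 : Polynomial (ZMod 2)) = X^(k+4) + (X + 1) := by ring
  rw [h]
  apply Polynomial.monic_X_pow_add
  have : (X + 1 : Polynomial (ZMod 2)) = X + C 1 := by simp
  rw [this, degree_X_add_C]
  have h9 : (1:ℕ) < k+4 := by omega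
  exact_mod_cast h9

private lemma Pdeg (k : ℕ) : degree (X^(k+4) + X + 1 : Polynomial (ZMod 2)) = ((k+4 : ℕ) : WithBot ℕ) := by
  have h : (X^(k+4) + X + 1 : Polynomial (ZMod 2)) = X^(k+4) + (X + 1) := by ring
  rw [h, degree_add_eq_left_of_degree_lt, degree_X_pow]
  rw [degree_X_pow]
  have : (X + 1 : Polynomial (ZMod 2)) = X + C 1 := by simp
  rw [this, degree_X_add_C]
  have h9 : (1:ℕ) < k+4 := by omega
  exact_mod_cast h9

private lemma cancel (k : ℕ) {p : Polynomial (ZMod 2)} (hpdef : p = X^(k+4)+X+1)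
    (hp : Irreducible p) {d u : Polynomial (ZMod 2)}
    (hd : d = 1 ∨ d = X ∨ d = X + 1) (hu : u.natDegree ≤ k + 3)
    (h0 : (u * d) %ₘ p = 0) : u = 0 := by
  have hmon : Monic p := hpdef ▸ Pmonic k
  have hdeg : p.natDegree = k + 4 := by
    have h1 := Pdeg k; rw [← hpdef] at h1
    exact natDegree_eq_of_degree_eq_some h1
  have hdvd : p ∣ u * d := (modByMonic_eq_zero_iff_dvd hmon).mp h0
  have hprime : Prime p := hp.prime
  rcases hprime.2.2 _ _ hdvd with h | h
  · by_contra hne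
    have := Polynomial.natDegree_le_of_dvd h hne
    omega
  · exfalso
    have hdne : d ≠ 0 := by
      rcases hd with rfl|rfl|rfl
      · exact one_ne_zero
      · exact X_ne_zero
      · have : (X + 1 : Polynomial (ZMod 2)) = X + C 1 := by simp
        rw [this]; exact X_add_C_ne_zero 1
    have h6 := Polynomial.natDegree_le_of_dvd h hdne
    have hd1 : d.natDegree ≤ 1 := by
      rcases hd with rfl|rfl|rfl
      · simp
      · simp
      · have : (X + 1 : Polynomial (ZMod 2)) = X + C 1 := by simp
        rw [this, natDegree_X_add_C]
    omega


private lemma part1 (k : ℕ) {p : Polynomial (ZMod 2)} (hpdef : p = X^(k+4)+X+1)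
    (hp : Irreducible p) {d : Polynomial (ZMod 2)} (hd : d = 1 ∨ d = X ∨ d = X + 1)
    {h : Polynomial (ZMod 2)} (hh : h.natDegree ≤ k + 3) :
    ∃! f : Polynomial (ZMod 2), f.natDegree ≤ k + 3 ∧ (f * d) %ₘ p = h := by
  have hmon : Monic p := hpdef ▸ Pmonic k
  have hdegp : degree p = ((k+4 : ℕ) : WithBot ℕ) := hpdef ▸ Pdeg k
  obtain ⟨e, c, hec⟩ : ∃ e c : Polynomial (ZMod 2), d * e = p * c + 1 := by
    rcases hd with rfl|rfl|rfl
    · exact ⟨1, 0, by ring⟩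
    · exact ⟨X^(k+3)+1, 1, by rw [hpdef]; linear_combination (-1 : Polynomial (ZMod 2)) * two_zero⟩
    · refine ⟨X * ∑ i ∈ Finset.range (k+3), X^i, 1, ?_⟩
      have hG := geom_sum_mul (X : Polynomial (ZMod 2)) (k+3)
      rw [hpdef]
      linear_combination X * hG
        + (X * ∑ i ∈ Finset.range (k+3), (X:Polynomial (ZMod 2))^i - X - 1) * two_zero
  set f0 : Polynomial (ZMod 2) := (h * e) %ₘ p with hf0
  have hprop : f0.natDegree ≤ k + 3 ∧ (f0 * d) %ₘ p = h := by
    constructor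
    · apply natdeg_le_of_deg_lt
      have := degree_modByMonic_lt (h*e) hmon
      rw [hdegp] at this
      exact_mod_cast this
    · apply mod_eq_of hmon (by rw [hdegp]; exact_mod_cast deg_lt hh (by omega))
      have heq : f0 = h*e - p*((h*e)/ₘp) := by
        rw [hf0]; linear_combination modByMonic_add_div (h*e) p
      exact ⟨h*c - ((h*e)/ₘp)*d, by linear_combination d * heq + h * hec⟩
  refine ⟨f0, hprop, ?_⟩
  rintro y ⟨hy1, hy2⟩
  have h0 : ((y - f0) * d) %ₘ p = 0 := by
    rw [sub_mul, sub_modByMonic, hy2, hprop.2, sub_self]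
  have hdeg : (y - f0).natDegree ≤ k + 3 :=
    le_trans (natDegree_sub_le _ _) (max_le hy1 hprop.1)
  exact sub_eq_zero.mp (cancel k hpdef hp hd hdeg h0)
private lemma part2 (k : ℕ) {p : Polynomial (ZMod 2)} (hpdef : p = X^(k+4)+X+1)
    (hp : Irreducible p) {d : Polynomial (ZMod 2)} (hd : d = 1 ∨ d = X ∨ d = X + 1)
    {h : Polynomial (ZMod 2)} (hh : h.natDegree ≤ k + 1) :
    ∃! f : Polynomial (ZMod 2),
      (f.natDegree ≤ k ∨ ∃ r : Polynomial (ZMod 2), r.natDegree ≤ k ∧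
        f = X^(k+3) + X^(k+2) + X^(k+1) + r) ∧
      ((f * d) %ₘ p) %ₘ X^(k+2) = h := by
  have hmon : Monic p := hpdef ▸ Pmonic k
  have hdegp : degree p = ((k+4 : ℕ) : WithBot ℕ) := hpdef ▸ Pdeg k
  have hmonX : Monic (X^(k+2) : Polynomial (ZMod 2)) := monic_X_pow _
  have hdegX : degree (X^(k+2) : Polynomial (ZMod 2)) = ((k+2 : ℕ) : WithBot ℕ) :=
    degree_X_pow _
  have modp : ∀ w : Polynomial (ZMod 2), w.natDegree ≤ k+3 → w %ₘ p = w := fun w hw =>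
    (modByMonic_eq_self_iff hmon).mpr (by rw [hdegp]; exact deg_lt hw (by omega))
  have modX : ∀ w : Polynomial (ZMod 2), w.natDegree ≤ k+1 → w %ₘ X^(k+2) = w := fun w hw =>
    (modByMonic_eq_self_iff hmonX).mpr (by rw [hdegX]; exact deg_lt hw (by omega))
  have hHr : ∀ r : Polynomial (ZMod 2), r.natDegree ≤ k →
      (X^(k+3)+X^(k+2)+X^(k+1)+r : Polynomial (ZMod 2)).natDegree ≤ k+3 := by
    intro r hr
    refine natDegree_add_le_of_degree_le (natDegree_add_le_of_degree_le
      (natDegree_add_le_of_degree_le (natDegree_X_pow _).le ?_) ?_) (by omega)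
    · rw [natDegree_X_pow]; omega
    · rw [natDegree_X_pow]; omega
  have rowdeg : ∀ f : Polynomial (ZMod 2),
      (f.natDegree ≤ k ∨ ∃ r : Polynomial (ZMod 2), r.natDegree ≤ k ∧
        f = X^(k+3)+X^(k+2)+X^(k+1)+r) → f.natDegree ≤ k+3 := by
    rintro f (hf | ⟨r, hr, rfl⟩)
    · omega
    · exact hHr r hr
  have hX1d : (X+1 : Polynomial (ZMod 2)).natDegree = 1 := by
    rw [show (X+1 : Polynomial (ZMod 2)) = X + C 1 by rw [map_one], natDegree_X_add_C]
  have hc2 : ∀ a : ZMod 2, a = 0 ∨ a = 1 := by decide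
  have fin : ∀ F : Polynomial (ZMod 2) → Polynomial (ZMod 2),
      (∀ f : Polynomial (ZMod 2),
        (f.natDegree ≤ k ∨ ∃ r : Polynomial (ZMod 2), r.natDegree ≤ k ∧
          f = X^(k+3)+X^(k+2)+X^(k+1)+r) →
        (f * d) %ₘ p = F (((f * d) %ₘ p) %ₘ X^(k+2))) →
      ∀ f0 : Polynomial (ZMod 2),
        ((f0.natDegree ≤ k ∨ ∃ r : Polynomial (ZMod 2), r.natDegree ≤ k ∧
          f0 = X^(k+3)+X^(k+2)+X^(k+1)+r) ∧
          ((f0 * d) %ₘ p) %ₘ X^(k+2) = h) →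
      ∃! f : Polynomial (ZMod 2),
        (f.natDegree ≤ k ∨ ∃ r : Polynomial (ZMod 2), r.natDegree ≤ k ∧
          f = X^(k+3) + X^(k+2) + X^(k+1) + r) ∧
        ((f * d) %ₘ p) %ₘ X^(k+2) = h := by
    intro F hF f0 hf0
    refine ⟨f0, hf0, ?_⟩
    rintro y ⟨hy1, hy2⟩
    have heq : (y*d) %ₘ p = (f0*d) %ₘ p := by rw [hF y hy1, hF f0 hf0.1, hy2, hf0.2]
    have h0 : ((y - f0)*d) %ₘ p = 0 := by rw [sub_mul, sub_modByMonic, heq, sub_self]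
    exact sub_eq_zero.mp (cancel k hpdef hp hd
      (le_trans (natDegree_sub_le _ _) (max_le (rowdeg y hy1) (rowdeg f0 hf0.1))) h0)
  rcases hd with rfl | rfl | rfl
  · -- d = 1
    have hkey : ∀ r : Polynomial (ZMod 2), r.natDegree ≤ k →
        (((X^(k+3)+X^(k+2)+X^(k+1)+r) * 1) %ₘ p) %ₘ X^(k+2) = X^(k+1)+r := by
      intro r hr
      rw [mul_one, modp _ (hHr r hr)]
      refine mod_eq_of hmonX ?_ ⟨X+1, by ring⟩
      rw [hdegX]
      exact deg_lt (natDegree_add_le_of_degree_le (natDegree_X_pow _).le (by omega)) (by omega)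
    have hF : ∀ f : Polynomial (ZMod 2),
        (f.natDegree ≤ k ∨ ∃ r : Polynomial (ZMod 2), r.natDegree ≤ k ∧
          f = X^(k+3)+X^(k+2)+X^(k+1)+r) →
        (f * 1) %ₘ p = (fun w => w + C (w.coeff (k+1)) * (X^(k+3)+X^(k+2)))
          (((f * 1) %ₘ p) %ₘ X^(k+2)) := by
      rintro f (hf | ⟨r, hr, rfl⟩) <;> dsimp only
      · rw [mul_one, modp f (by omega), modX f (by omega),
          coeff_eq_zero_of_natDegree_lt (show f.natDegree < k+1 by omega)]
        simp
      · rw [hkey r hr, mul_one, modp _ (hHr r hr)]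
        have hc : (X^(k+1)+r : Polynomial (ZMod 2)).coeff (k+1) = 1 := by
          rw [coeff_add, coeff_X_pow,
            coeff_eq_zero_of_natDegree_lt (show r.natDegree < k+1 by omega)]
          simp
        rw [hc, map_one, one_mul]; ring
    obtain ⟨f0, hf0⟩ : ∃ f0 : Polynomial (ZMod 2),
        (f0.natDegree ≤ k ∨ ∃ r : Polynomial (ZMod 2), r.natDegree ≤ k ∧
          f0 = X^(k+3)+X^(k+2)+X^(k+1)+r) ∧
        ((f0 * 1) %ₘ p) %ₘ X^(k+2) = h := by
      rcases hc2 (h.coeff (k+1)) with hc | hc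
      · refine ⟨h, Or.inl ?_, ?_⟩
        · refine natDegree_le_iff_coeff_eq_zero.mpr (fun N hN => ?_)
          rcases Nat.lt_or_ge N (k+2) with hN2 | hN2
          · have hNe : N = k+1 := by omega
            rw [hNe]; exact hc
          · exact coeff_eq_zero_of_natDegree_lt (by omega)
        · rw [mul_one, modp h (by omega), modX h hh]
      · have hrk : (h + X^(k+1) : Polynomial (ZMod 2)).natDegree ≤ k := by
          refine natDegree_le_iff_coeff_eq_zero.mpr (fun N hN => ?_)
          rw [coeff_add, coeff_X_pow]
          rcases Nat.lt_or_ge N (k+2) with hN2 | hN2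
          · have hNe : N = k+1 := by omega
            subst hNe
            rw [hc, if_pos rfl]
            decide
          · rw [coeff_eq_zero_of_natDegree_lt (by omega), if_neg (by omega)]
            simp
        refine ⟨X^(k+3)+X^(k+2)+X^(k+1)+(h+X^(k+1)), Or.inr ⟨h+X^(k+1), hrk, rfl⟩, ?_⟩
        rw [hkey _ hrk]
        linear_combination (X^(k+1) : Polynomial (ZMod 2)) * two_zero
    exact fin (fun w => w + C (w.coeff (k+1)) * (X^(k+3)+X^(k+2))) hF f0 hf0
  · -- d = X
    have hkeyX : ∀ r : Polynomial (ZMod 2), r.natDegree ≤ k →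
        ((X^(k+3)+X^(k+2)+X^(k+1)+r) * X) %ₘ p = X^(k+3)+X^(k+2)+(r*X+X+1) ∧
        (((X^(k+3)+X^(k+2)+X^(k+1)+r) * X) %ₘ p) %ₘ X^(k+2) = r*X+X+1 := by
      intro r hr
      have hw : (r*X+X+1 : Polynomial (ZMod 2)).natDegree ≤ k+1 := by
        refine natDegree_add_le_of_degree_le (natDegree_add_le_of_degree_le
          (le_trans natDegree_mul_le ?_) (le_trans natDegree_X_le (by omega))) ?_
        · rw [natDegree_X]; omega
        · rw [natDegree_one]; omega
      have h1 : ((X^(k+3)+X^(k+2)+X^(k+1)+r) * X) %ₘ p = X^(k+3)+X^(k+2)+(r*X+X+1) := by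
        refine mod_eq_of hmon ?_ ⟨1, ?_⟩
        · rw [hdegp]
          refine deg_lt (natDegree_add_le_of_degree_le (natDegree_add_le_of_degree_le
            (natDegree_X_pow _).le ?_) (hw.trans (by omega))) (by omega)
          rw [natDegree_X_pow]; omega
        · rw [hpdef]
          linear_combination (-(X : Polynomial (ZMod 2)) - 1) * two_zero
      refine ⟨h1, ?_⟩
      rw [h1]
      exact mod_eq_of hmonX (by rw [hdegX]; exact deg_lt hw (by omega)) ⟨X+1, by ring⟩
    have hF : ∀ f : Polynomial (ZMod 2),
        (f.natDegree ≤ k ∨ ∃ r : Polynomial (ZMod 2), r.natDegree ≤ k ∧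
          f = X^(k+3)+X^(k+2)+X^(k+1)+r) →
        (f * X) %ₘ p = (fun w => w + C (w.coeff 0) * (X^(k+3)+X^(k+2)))
          (((f * X) %ₘ p) %ₘ X^(k+2)) := by
      rintro f (hf | ⟨r, hr, rfl⟩) <;> dsimp only
      · have hfd : (f*X).natDegree ≤ k+1 :=
          le_trans natDegree_mul_le (by rw [natDegree_X]; omega)
        rw [modp _ (by omega), modX _ hfd, mul_coeff_zero, coeff_X_zero, mul_zero,
          map_zero, zero_mul, add_zero]
      · rw [(hkeyX r hr).2, (hkeyX r hr).1]
        have hc : (r*X+X+1 : Polynomial (ZMod 2)).coeff 0 = 1 := by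
          rw [coeff_add, coeff_add, mul_coeff_zero, coeff_X_zero, coeff_one]
          simp
        rw [hc, map_one, one_mul]; ring
    obtain ⟨f0, hf0⟩ : ∃ f0 : Polynomial (ZMod 2),
        (f0.natDegree ≤ k ∨ ∃ r : Polynomial (ZMod 2), r.natDegree ≤ k ∧
          f0 = X^(k+3)+X^(k+2)+X^(k+1)+r) ∧
        ((f0 * X) %ₘ p) %ₘ X^(k+2) = h := by
      rcases hc2 (h.coeff 0) with hc | hc
      · have hdiv : h.divX.natDegree ≤ k :=
          natDegree_le_iff_coeff_eq_zero.mpr (fun N hN => by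
            rw [coeff_divX]; exact coeff_eq_zero_of_natDegree_lt (by omega))
        refine ⟨h.divX, Or.inl hdiv, ?_⟩
        have hXd : h.divX * X = h := by
          have h5 := X_mul_divX_add h
          rw [hc, map_zero, add_zero] at h5
          rw [mul_comm]; exact h5
        rw [hXd, modp h (by omega), modX h hh]
      · have hc0 : (h+X+1 : Polynomial (ZMod 2)).coeff 0 = 0 := by
          rw [coeff_add, coeff_add, hc, coeff_X_zero, coeff_one, if_pos rfl]
          decide
        have hrk : (h+X+1 : Polynomial (ZMod 2)).divX.natDegree ≤ k := by
          refine natDegree_le_iff_coeff_eq_zero.mpr (fun N hN => ?_)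
          rw [coeff_divX, coeff_add, coeff_add, coeff_X, coeff_one,
            coeff_eq_zero_of_natDegree_lt (show h.natDegree < N+1 by omega),
            if_neg (by omega), if_neg (by omega)]
          simp
        have hXr : (h+X+1 : Polynomial (ZMod 2)).divX * X = h + X + 1 := by
          have h5 := X_mul_divX_add (h+X+1 : Polynomial (ZMod 2))
          rw [hc0, map_zero, add_zero] at h5
          rw [mul_comm]; exact h5
        refine ⟨X^(k+3)+X^(k+2)+X^(k+1)+(h+X+1).divX,
          Or.inr ⟨(h+X+1).divX, hrk, rfl⟩, ?_⟩
        rw [(hkeyX _ hrk).2]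
        linear_combination hXr + (X+1 : Polynomial (ZMod 2)) * two_zero
    exact fin (fun w => w + C (w.coeff 0) * (X^(k+3)+X^(k+2))) hF f0 hf0
  · -- d = X + 1
    have hXne : (X+1 : Polynomial (ZMod 2)) ≠ 0 := by
      rw [show (X+1 : Polynomial (ZMod 2)) = X + C 1 by rw [map_one]]
      exact X_add_C_ne_zero 1
    have hkey1 : ∀ r : Polynomial (ZMod 2), r.natDegree ≤ k →
        ((X^(k+3)+X^(k+2)+X^(k+1)+r) * (X+1)) %ₘ p = X^(k+1)+X+1+r*(X+1) ∧
        (((X^(k+3)+X^(k+2)+X^(k+1)+r) * (X+1)) %ₘ p) %ₘ X^(k+2) = X^(k+1)+X+1+r*(X+1) := by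
      intro r hr
      have hw : (X^(k+1)+X+1+r*(X+1) : Polynomial (ZMod 2)).natDegree ≤ k+1 := by
        refine natDegree_add_le_of_degree_le (natDegree_add_le_of_degree_le
          (natDegree_add_le_of_degree_le (natDegree_X_pow _).le
            (le_trans natDegree_X_le (by omega))) ?_) (le_trans natDegree_mul_le ?_)
        · rw [natDegree_one]; omega
        · rw [hX1d]; omega
      have h1 : ((X^(k+3)+X^(k+2)+X^(k+1)+r) * (X+1)) %ₘ p = X^(k+1)+X+1+r*(X+1) := by
        refine mod_eq_of hmon ?_ ⟨1, ?_⟩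
        · rw [hdegp]; exact deg_lt hw (by omega)
        · rw [hpdef]
          linear_combination (X^(k+3)+X^(k+2)-X-1 : Polynomial (ZMod 2)) * two_zero
      exact ⟨h1, by rw [h1]; exact modX _ hw⟩
    have hF : ∀ f : Polynomial (ZMod 2),
        (f.natDegree ≤ k ∨ ∃ r : Polynomial (ZMod 2), r.natDegree ≤ k ∧
          f = X^(k+3)+X^(k+2)+X^(k+1)+r) →
        (f * (X+1)) %ₘ p = (fun w => w) (((f * (X+1)) %ₘ p) %ₘ X^(k+2)) := by
      rintro f (hf | ⟨r, hr, rfl⟩) <;> dsimp only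
      · have hfd : (f*(X+1)).natDegree ≤ k+1 :=
          le_trans natDegree_mul_le (by rw [hX1d]; omega)
        rw [modp _ (by omega), modX _ hfd]
      · rw [(hkey1 r hr).2, (hkey1 r hr).1]
    obtain ⟨f0, hf0⟩ : ∃ f0 : Polynomial (ZMod 2),
        (f0.natDegree ≤ k ∨ ∃ r : Polynomial (ZMod 2), r.natDegree ≤ k ∧
          f0 = X^(k+3)+X^(k+2)+X^(k+1)+r) ∧
        ((f0 * (X+1)) %ₘ p) %ₘ X^(k+2) = h := by
      rcases hc2 (h.eval 1) with hc | hc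
      · have hdvd : (X+1 : Polynomial (ZMod 2)) ∣ h := by
          rw [show (X+1 : Polynomial (ZMod 2)) = X - C 1 by
            rw [map_one]; linear_combination two_zero]
          exact dvd_iff_isRoot.mpr hc
        obtain ⟨q, hq⟩ := hdvd
        have hqd : q.natDegree ≤ k := by
          by_cases hq0 : q = 0
          · simp [hq0]
          · have h6 := natDegree_mul hXne hq0
            rw [← hq, hX1d] at h6
            omega
        refine ⟨q, Or.inl hqd, ?_⟩
        have hfd : (q*(X+1)).natDegree ≤ k+1 :=
          le_trans natDegree_mul_le (by rw [hX1d]; omega)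
        rw [modp _ (by omega), modX _ hfd, mul_comm, ← hq]
      · have hdvd : (X+1 : Polynomial (ZMod 2)) ∣ (h + X^(k+1)) := by
          rw [show (X+1 : Polynomial (ZMod 2)) = X - C 1 by
            rw [map_one]; linear_combination two_zero]
          refine dvd_iff_isRoot.mpr ?_
          show (h + X^(k+1) : Polynomial (ZMod 2)).eval 1 = 0
          rw [eval_add, eval_pow, eval_X, one_pow, hc]
          decide
        obtain ⟨q, hq⟩ := hdvd
        have hhd : (h + X^(k+1) : Polynomial (ZMod 2)).natDegree ≤ k+1 :=
          natDegree_add_le_of_degree_le hh (natDegree_X_pow _).le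
        have hqd : q.natDegree ≤ k := by
          by_cases hq0 : q = 0
          · simp [hq0]
          · have h6 := natDegree_mul hXne hq0
            rw [← hq, hX1d] at h6
            omega
        have hrk : (q+1 : Polynomial (ZMod 2)).natDegree ≤ k :=
          natDegree_add_le_of_degree_le hqd (by rw [natDegree_one]; omega)
        refine ⟨X^(k+3)+X^(k+2)+X^(k+1)+(q+1), Or.inr ⟨q+1, hrk, rfl⟩, ?_⟩
        rw [(hkey1 (q+1) hrk).2]
        linear_combination -hq + (X^(k+1)+X+1 : Polynomial (ZMod 2)) * two_zero
    exact fin (fun w => w) hF f0 hf0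

private lemma diff_cases {g g' : Polynomial (ZMod 2)}
    (hg : g ∈ ({0, 1, X, X + 1} : Set (Polynomial (ZMod 2))))
    (hg' : g' ∈ ({0, 1, X, X + 1} : Set (Polynomial (ZMod 2)))) (hne : g ≠ g') :
    g - g' = 1 ∨ g - g' = X ∨ g - g' = X + 1 := by
  simp only [Set.mem_insert_iff, Set.mem_singleton_iff] at hg hg'
  rcases hg with rfl | rfl | rfl | rfl <;> rcases hg' with rfl | rfl | rfl | rfl <;>
    first
    | exact absurd rfl hne
    | (left; first
        | ring1
        | linear_combination -two_zero
        | linear_combination -(X : Polynomial (ZMod 2)) * two_zero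
        | linear_combination (-(X : Polynomial (ZMod 2)) - 1) * two_zero)
    | (right; left; first
        | ring1
        | linear_combination -two_zero
        | linear_combination -(X : Polynomial (ZMod 2)) * two_zero
        | linear_combination (-(X : Polynomial (ZMod 2)) - 1) * two_zero)
    | (right; right; first
        | ring1
        | linear_combination -two_zero
        | linear_combination -(X : Polynomial (ZMod 2)) * two_zero
        | linear_combination (-(X : Polynomial (ZMod 2)) - 1) * two_zero)

/-- Theorem 2 of the paper. Work in F = GF(2^{m+2}) =
GF(2)[x]/(x^{m+2}+x+1), elements represented by polynomials of degree ≤ m+1.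
(i) The multiplication table with rows f ∈ F and columns g ∈ {0,1,x,x+1} is a
difference matrix D(2^{m+2}, 4, 2^{m+2}). (ii) Restricting rows to
R ∪ (x^{m+1}+x^m+x^{m-1}+R), with R the polynomials of degree ≤ m−2, and
truncating entries to degree < m (the projection φ = `%ₘ X^m` into GF(2^m)),
gives a difference matrix D(2^m, 4, 2^m). -/
theorem stmt14 (m : ℕ) (hm : 2 ≤ m)
    (p : Polynomial (ZMod 2)) (hpdef : p = X ^ (m + 2) + X + 1) (hp : Irreducible p) :
    (∀ g ∈ ({0, 1, X, X + 1} : Set (Polynomial (ZMod 2))),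
      ∀ g' ∈ ({0, 1, X, X + 1} : Set (Polynomial (ZMod 2))), g ≠ g' →
        ∀ h : Polynomial (ZMod 2), h.natDegree ≤ m + 1 →
          ∃! f : Polynomial (ZMod 2),
            f.natDegree ≤ m + 1 ∧ (f * g) %ₘ p - (f * g') %ₘ p = h)
    ∧
    (∀ g ∈ ({0, 1, X, X + 1} : Set (Polynomial (ZMod 2))),
      ∀ g' ∈ ({0, 1, X, X + 1} : Set (Polynomial (ZMod 2))), g ≠ g' →
        ∀ h : Polynomial (ZMod 2), h.natDegree ≤ m - 1 →
          ∃! f : Polynomial (ZMod 2),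
            (f.natDegree ≤ m - 2 ∨
              ∃ r : Polynomial (ZMod 2), r.natDegree ≤ m - 2 ∧
                f = X ^ (m + 1) + X ^ m + X ^ (m - 1) + r) ∧
            ((f * g) %ₘ p) %ₘ X ^ m - ((f * g') %ₘ p) %ₘ X ^ m = h) := by
  obtain ⟨k, rfl⟩ : ∃ k, m = k + 2 := ⟨m - 2, by omega⟩
  have hpdef' : p = X ^ (k + 4) + X + 1 := hpdef
  constructor
  · intro g hg g' hg' hne h hh
    have hsub : ∀ f : Polynomial (ZMod 2),
        (f * g) %ₘ p - (f * g') %ₘ p = (f * (g - g')) %ₘ p := by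
      intro f; rw [← sub_modByMonic, ← mul_sub]
    simp only [hsub]
    exact part1 k hpdef' hp (diff_cases hg hg' hne) hh
  · intro g hg g' hg' hne h hh
    have hsub : ∀ f : Polynomial (ZMod 2),
        ((f * g) %ₘ p) %ₘ X ^ (k + 2) - ((f * g') %ₘ p) %ₘ X ^ (k + 2)
          = ((f * (g - g')) %ₘ p) %ₘ X ^ (k + 2) := by
      intro f; rw [← sub_modByMonic, ← sub_modByMonic, ← mul_sub]
    simp only [hsub]
    exact part2 k hpdef' hp (diff_cases hg hg' hne) hh
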